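/- Let A be a partial H-bimodule algebra satisfying the symmetry condition, φ:A→Hom_k(H,A) the map φ(a)(h)=h₁⇀a↼S(h₂), and for h∈H, f∈Hom_k(H,A) define (h▷f)(k):=f(kh). Then for all a,b∈A and h∈H: φ(b)∗(h▷φ(a)) = φ(b(h₁⇀a↼S(h₂))); in particular φ(1_A)∗(h▷φ(a)) = φ(h₁⇀a↼S(h₂)). -/

import Mathlib

open TensorProduct

noncomputable section

namespace PBA

section Coalg

variable {k : Type} [CommSemiring k]
variable {C : Type} [AddCommMonoid C] [Module k C] [Coalgebra k C]

/-- a chosen finite representation of the comultiplication -/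
noncomputable def rep (z : C) : Finset (C × C) :=
  (TensorProduct.exists_finset (R := k) (Coalgebra.comul (R := k) z)).choose

lemma rep_eq (z : C) :
    Coalgebra.comul (R := k) z = ∑ p ∈ rep (k := k) z, p.1 ⊗ₜ[k] p.2 :=
  (TensorProduct.exists_finset (R := k) (Coalgebra.comul (R := k) z)).choose_spec

variable (k) in
lemma coassoc_sum {M : Type} [AddCommMonoid M] [Module k M]
    (Φ : (C ⊗[k] C) ⊗[k] C →ₗ[k] M) (z : C) :
    ∑ p ∈ rep (k := k) z, ∑ w ∈ rep (k := k) p.1, Φ ((w.1 ⊗ₜ[k] w.2) ⊗ₜ[k] p.2)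
      = ∑ p ∈ rep (k := k) z, ∑ w ∈ rep (k := k) p.2, Φ ((p.1 ⊗ₜ[k] w.1) ⊗ₜ[k] w.2) := by
  have h1 : (Coalgebra.comul (R := k)).rTensor C (Coalgebra.comul (R := k) z)
      = ∑ p ∈ rep (k := k) z, ∑ w ∈ rep (k := k) p.1, (w.1 ⊗ₜ[k] w.2) ⊗ₜ[k] p.2 := by
    rw [rep_eq z, map_sum]
    refine Finset.sum_congr rfl fun p _ => ?_
    rw [LinearMap.rTensor_tmul, rep_eq p.1, sum_tmul]
  have h2 : (TensorProduct.assoc k C C C).symm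
        ((Coalgebra.comul (R := k)).lTensor C (Coalgebra.comul (R := k) z))
      = ∑ p ∈ rep (k := k) z, ∑ w ∈ rep (k := k) p.2, (p.1 ⊗ₜ[k] w.1) ⊗ₜ[k] w.2 := by
    rw [rep_eq z, map_sum, map_sum]
    refine Finset.sum_congr rfl fun p _ => ?_
    rw [LinearMap.lTensor_tmul, rep_eq p.2, tmul_sum, map_sum]
    exact Finset.sum_congr rfl fun w _ => by
      rw [TensorProduct.assoc_symm_tmul]
  have h3 := Coalgebra.coassoc_symm_apply (R := k) z
  have : (∑ p ∈ rep (k := k) z, ∑ w ∈ rep (k := k) p.1, (w.1 ⊗ₜ[k] w.2) ⊗ₜ[k] p.2 :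
      (C ⊗[k] C) ⊗[k] C) = ∑ p ∈ rep (k := k) z, ∑ w ∈ rep (k := k) p.2,
        (p.1 ⊗ₜ[k] w.1) ⊗ₜ[k] w.2 := by
    rw [← h1, ← h2, h3]
  calc ∑ p ∈ rep (k := k) z, ∑ w ∈ rep (k := k) p.1, Φ ((w.1 ⊗ₜ[k] w.2) ⊗ₜ[k] p.2)
      = Φ (∑ p ∈ rep (k := k) z, ∑ w ∈ rep (k := k) p.1, (w.1 ⊗ₜ[k] w.2) ⊗ₜ[k] p.2) := by
        rw [map_sum]; exact Finset.sum_congr rfl fun p _ => (map_sum Φ _ _).symm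
    _ = Φ (∑ p ∈ rep (k := k) z, ∑ w ∈ rep (k := k) p.2, (p.1 ⊗ₜ[k] w.1) ⊗ₜ[k] w.2) := by
        rw [this]
    _ = _ := by rw [map_sum]; exact Finset.sum_congr rfl fun p _ => map_sum Φ _ _

lemma sum_counit_fst_smul (z : C) :
    ∑ p ∈ rep (k := k) z, (Coalgebra.counit (R := k) p.1 : k) • p.2 = z := by
  have h := Coalgebra.rTensor_counit_comul (R := k) z
  rw [rep_eq z, map_sum] at h
  have := congrArg (TensorProduct.lid k C) h
  simpa [map_sum] using this

lemma sum_counit_snd_smul (z : C) :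
    ∑ p ∈ rep (k := k) z, (Coalgebra.counit (R := k) p.2 : k) • p.1 = z := by
  have h := Coalgebra.lTensor_counit_comul (R := k) z
  rw [rep_eq z, map_sum] at h
  have := congrArg (TensorProduct.rid k C) h
  simpa [map_sum] using this

end Coalg

section Conv

variable {k : Type} [CommSemiring k]
variable {C : Type} [AddCommMonoid C] [Module k C] [Coalgebra k C]
variable {B : Type} [Semiring B] [Algebra k B]

/-- convolution product -/
def cv (f g : C →ₗ[k] B) : C →ₗ[k] B :=
  LinearMap.mul' k B ∘ₗ TensorProduct.map f g ∘ₗ Coalgebra.comul (R := k)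

lemma cv_apply (f g : C →ₗ[k] B) (z : C) :
    cv f g z = ∑ p ∈ rep (k := k) z, f p.1 * g p.2 := by
  simp only [cv, LinearMap.comp_apply, rep_eq z, map_sum, TensorProduct.map_tmul,
    LinearMap.mul'_apply]

/-- convolution unit -/
def cu : C →ₗ[k] B := Algebra.linearMap k B ∘ₗ Coalgebra.counit (R := k)

lemma cv_assoc (f g h : C →ₗ[k] B) : cv (cv f g) h = cv f (cv g h) := by
  ext z
  rw [cv_apply, cv_apply]
  have lhs : ∑ p ∈ rep (k := k) z, cv f g p.1 * h p.2
      = ∑ p ∈ rep (k := k) z, ∑ w ∈ rep (k := k) p.1,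
          (LinearMap.mul' k B ∘ₗ TensorProduct.map (LinearMap.mul' k B ∘ₗ TensorProduct.map f g) h)
            ((w.1 ⊗ₜ[k] w.2) ⊗ₜ[k] p.2) := by
    refine Finset.sum_congr rfl fun p _ => ?_
    rw [cv_apply, Finset.sum_mul]
    exact Finset.sum_congr rfl fun w _ => by simp
  rw [lhs, coassoc_sum]
  refine Finset.sum_congr rfl fun p _ => ?_
  rw [cv_apply, Finset.mul_sum]
  exact Finset.sum_congr rfl fun w _ => by simp [mul_assoc]

lemma cv_one_left (f : C →ₗ[k] B) : cv cu f = f := by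
  ext z
  rw [cv_apply]
  calc ∑ p ∈ rep (k := k) z, cu (B := B) p.1 * f p.2
      = ∑ p ∈ rep (k := k) z, f ((Coalgebra.counit (R := k) p.1 : k) • p.2) := by
        refine Finset.sum_congr rfl fun p _ => ?_
        simp [cu, Algebra.smul_def, map_smul]
    _ = f z := by rw [← map_sum, sum_counit_fst_smul]

lemma cv_one_right (f : C →ₗ[k] B) : cv f cu = f := by
  ext z
  rw [cv_apply]
  calc ∑ p ∈ rep (k := k) z, f p.1 * cu (B := B) p.2
      = ∑ p ∈ rep (k := k) z, f ((Coalgebra.counit (R := k) p.2 : k) • p.1) := by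
        refine Finset.sum_congr rfl fun p _ => ?_
        simp [cu, Algebra.smul_def, map_smul, Algebra.commutes, mul_comm]
    _ = f z := by rw [← map_sum, sum_counit_snd_smul]

lemma cv_inv_unique {f m g : C →ₗ[k] B} (h1 : cv f m = cu) (h2 : cv m g = cu) : f = g := by
  have : cv f (cv m g) = cv (cv f m) g := (cv_assoc f m g).symm
  rw [h1, h2, cv_one_right, cv_one_left] at this
  exact this

end Conv

section Hopf

variable {k H : Type} [Field k] [Ring H] [HopfAlgebra k H]

local notation "𝒮" => (HopfAlgebra.antipode (R := k) (A := H))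
local notation "ε" => (Coalgebra.counit (R := k) (A := H))

lemma sum_S_mul {ι : Type} (z : H) (s : Finset ι) (f g : ι → H)
    (hr : Coalgebra.comul (R := k) z = ∑ i ∈ s, f i ⊗ₜ[k] g i) :
    ∑ i ∈ s, 𝒮 (f i) * g i = algebraMap k H (ε z) := by
  have h := HopfAlgebra.mul_antipode_rTensor_comul_apply (R := k) z
  rw [hr] at h
  simpa [map_sum] using h

lemma sum_mul_S {ι : Type} (z : H) (s : Finset ι) (f g : ι → H)
    (hr : Coalgebra.comul (R := k) z = ∑ i ∈ s, f i ⊗ₜ[k] g i) :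
    ∑ i ∈ s, f i * 𝒮 (g i) = algebraMap k H (ε z) := by
  have h := HopfAlgebra.mul_antipode_lTensor_comul_apply (R := k) z
  rw [hr] at h
  simpa [map_sum] using h

lemma comul_mul_rep (u v : H) :
    Coalgebra.comul (R := k) (u * v)
      = ∑ p ∈ rep (k := k) u, ∑ q ∈ rep (k := k) v, (p.1 * q.1) ⊗ₜ[k] (p.2 * q.2) := by
  rw [Bialgebra.comul_mul, rep_eq (k := k) u, rep_eq (k := k) v, Finset.sum_mul_sum]
  exact Finset.sum_congr rfl fun p _ => Finset.sum_congr rfl fun q _ =>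
    Algebra.TensorProduct.tmul_mul_tmul _ _ _ _

lemma comul_tmul_rep (u v : H) :
    Coalgebra.comul (R := k) (u ⊗ₜ[k] v)
      = ∑ p ∈ rep (k := k) u, ∑ q ∈ rep (k := k) v,
          (p.1 ⊗ₜ[k] q.1) ⊗ₜ[k] (p.2 ⊗ₜ[k] q.2) := by
  rw [TensorProduct.comul_def]
  show (TensorProduct.tensorTensorTensorComm k H H H H)
    (TensorProduct.map (Coalgebra.comul) (Coalgebra.comul) (u ⊗ₜ[k] v)) = _
  rw [TensorProduct.map_tmul, rep_eq (k := k) u, rep_eq (k := k) v, sum_tmul, map_sum]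
  refine Finset.sum_congr rfl fun p _ => ?_
  rw [tmul_sum, map_sum]
  exact Finset.sum_congr rfl fun q _ => TensorProduct.tensorTensorTensorComm_tmul ..

theorem S_mul_anti (u v : H) : 𝒮 (u * v) = 𝒮 v * 𝒮 u := by
  have h1 : cv (k := k) (𝒮 ∘ₗ LinearMap.mul' k H) (LinearMap.mul' k H) = cu := by
    apply TensorProduct.ext'
    intro x y
    have e1 : cv (k := k) (𝒮 ∘ₗ LinearMap.mul' k H) (LinearMap.mul' k H) (x ⊗ₜ[k] y)
        = ∑ p ∈ rep (k := k) x, ∑ q ∈ rep (k := k) y, 𝒮 (p.1 * q.1) * (p.2 * q.2) := by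
      rw [cv, LinearMap.comp_apply, LinearMap.comp_apply, comul_tmul_rep]
      simp [map_sum]
    have e2 : Coalgebra.comul (R := k) (x * y)
        = ∑ pq ∈ (rep (k := k) x) ×ˢ (rep (k := k) y),
            (pq.1.1 * pq.2.1) ⊗ₜ[k] (pq.1.2 * pq.2.2) := by
      rw [comul_mul_rep, ← Finset.sum_product']
    have e3 := sum_S_mul (x * y) _ _ _ e2
    rw [Finset.sum_product] at e3
    rw [e1, e3]
    show _ = (Algebra.linearMap k H ∘ₗ Coalgebra.counit (R := k)) (x ⊗ₜ[k] y)
    rw [LinearMap.comp_apply, TensorProduct.counit_def]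
    simp [Bialgebra.counit_mul, mul_comm]
  have h2 : cv (k := k) (LinearMap.mul' k H)
      (LinearMap.mul' k H ∘ₗ TensorProduct.map 𝒮 𝒮 ∘ₗ (TensorProduct.comm k H H).toLinearMap)
        = cu := by
    apply TensorProduct.ext'
    intro x y
    have e1 : cv (k := k) (LinearMap.mul' k H)
        (LinearMap.mul' k H ∘ₗ TensorProduct.map 𝒮 𝒮 ∘ₗ (TensorProduct.comm k H H).toLinearMap)
          (x ⊗ₜ[k] y)
        = ∑ p ∈ rep (k := k) x, ∑ q ∈ rep (k := k) y, (p.1 * q.1) * (𝒮 q.2 * 𝒮 p.2) := by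
      rw [cv, LinearMap.comp_apply, LinearMap.comp_apply, comul_tmul_rep]
      simp [map_sum]
    rw [e1]
    have hv := sum_mul_S (k := k) y _ _ _ (rep_eq (k := k) y)
    have hu := sum_mul_S (k := k) x _ _ _ (rep_eq (k := k) x)
    have inner : ∀ p : H × H,
        ∑ q ∈ rep (k := k) y, (p.1 * q.1) * (𝒮 q.2 * 𝒮 p.2)
          = Coalgebra.counit (R := k) y • (p.1 * 𝒮 p.2) := by
      intro p
      calc ∑ q ∈ rep (k := k) y, (p.1 * q.1) * (𝒮 q.2 * 𝒮 p.2)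
          = ∑ q ∈ rep (k := k) y, p.1 * ((q.1 * 𝒮 q.2) * 𝒮 p.2) := by
            refine Finset.sum_congr rfl fun q _ => by simp [mul_assoc]
        _ = p.1 * ((∑ q ∈ rep (k := k) y, q.1 * 𝒮 q.2) * 𝒮 p.2) := by
            rw [Finset.sum_mul, Finset.mul_sum]
        _ = p.1 * (algebraMap k H (Coalgebra.counit (R := k) y) * 𝒮 p.2) := by rw [hv]
        _ = Coalgebra.counit (R := k) y • (p.1 * 𝒮 p.2) := by
            rw [← Algebra.smul_def, mul_smul_comm]
    calc ∑ p ∈ rep (k := k) x, ∑ q ∈ rep (k := k) y, (p.1 * q.1) * (𝒮 q.2 * 𝒮 p.2)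
        = ∑ p ∈ rep (k := k) x, Coalgebra.counit (R := k) y • (p.1 * 𝒮 p.2) := by
          exact Finset.sum_congr rfl fun p _ => inner p
      _ = Coalgebra.counit (R := k) y • algebraMap k H (Coalgebra.counit (R := k) x) := by
          rw [← Finset.smul_sum, hu]
      _ = (Algebra.linearMap k H ∘ₗ Coalgebra.counit (R := k)) (x ⊗ₜ[k] y) := by
          rw [LinearMap.comp_apply, TensorProduct.counit_def]
          simp [Algebra.smul_def, ← map_mul, mul_comm]
  have key := cv_inv_unique h1 h2
  have := LinearMap.congr_fun key (u ⊗ₜ[k] v)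
  simpa using this

theorem comul_S_rep (z : H) :
    Coalgebra.comul (R := k) (𝒮 z) = ∑ p ∈ rep (k := k) z, 𝒮 p.2 ⊗ₜ[k] 𝒮 p.1 := by
  have h1 : cv (k := k) (Coalgebra.comul (R := k) ∘ₗ 𝒮) (Coalgebra.comul (R := k) (A := H))
      = cu := by
    apply LinearMap.ext
    intro w
    rw [cv_apply]
    calc ∑ p ∈ rep (k := k) w, (Coalgebra.comul (R := k) ∘ₗ 𝒮) p.1 * Coalgebra.comul (R := k) p.2
        = ∑ p ∈ rep (k := k) w, Coalgebra.comul (R := k) (𝒮 p.1 * p.2) := by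
          refine Finset.sum_congr rfl fun p _ => by rw [LinearMap.comp_apply, Bialgebra.comul_mul]
      _ = Coalgebra.comul (R := k) (∑ p ∈ rep (k := k) w, 𝒮 p.1 * p.2) := (map_sum _ _ _).symm
      _ = Coalgebra.comul (R := k) (algebraMap k H (Coalgebra.counit (R := k) w)) := by
          rw [sum_S_mul w _ _ _ (rep_eq (k := k) w)]
      _ = cu w := by rw [Bialgebra.comul_algebraMap]; rfl
  have h2 : cv (k := k) (Coalgebra.comul (R := k) (A := H))
      (TensorProduct.map 𝒮 𝒮 ∘ₗ (TensorProduct.comm k H H).toLinearMap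
        ∘ₗ Coalgebra.comul (R := k)) = cu := by
    apply LinearMap.ext
    intro w
    rw [cv_apply]
    set Φ₁ : (H ⊗[k] H) ⊗[k] H →ₗ[k] H ⊗[k] H :=
      LinearMap.mul' k (H ⊗[k] H) ∘ₗ
        TensorProduct.map (Coalgebra.comul (R := k))
          (TensorProduct.map 𝒮 𝒮 ∘ₗ (TensorProduct.comm k H H).toLinearMap) ∘ₗ
            (TensorProduct.assoc k H H H).toLinearMap with hΦ₁
    have Φ₁pure : ∀ x y z' : H, Φ₁ ((x ⊗ₜ[k] y) ⊗ₜ[k] z')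
        = Coalgebra.comul (R := k) x * (𝒮 z' ⊗ₜ[k] 𝒮 y) := by
      intro x y z'
      rw [hΦ₁]
      simp
    calc ∑ p ∈ rep (k := k) w, Coalgebra.comul (R := k) p.1 *
            (TensorProduct.map 𝒮 𝒮 ∘ₗ (TensorProduct.comm k H H).toLinearMap
              ∘ₗ Coalgebra.comul (R := k)) p.2
        = ∑ p ∈ rep (k := k) w, ∑ v ∈ rep (k := k) p.2, Φ₁ ((p.1 ⊗ₜ[k] v.1) ⊗ₜ[k] v.2) := by
          refine Finset.sum_congr rfl fun p _ => ?_
          rw [LinearMap.comp_apply, LinearMap.comp_apply, rep_eq (k := k) p.2, map_sum, map_sum,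
            Finset.mul_sum]
          refine Finset.sum_congr rfl fun v _ => ?_
          rw [Φ₁pure]
          simp
      _ = ∑ p ∈ rep (k := k) w, ∑ v ∈ rep (k := k) p.1, Φ₁ ((v.1 ⊗ₜ[k] v.2) ⊗ₜ[k] p.2) :=
          (coassoc_sum k Φ₁ w).symm
      _ = ∑ p ∈ rep (k := k) w, ∑ v ∈ rep (k := k) p.1, ∑ t ∈ rep (k := k) v.1,
            (t.1 * 𝒮 p.2) ⊗ₜ[k] (t.2 * 𝒮 v.2) := by
          refine Finset.sum_congr rfl fun p _ => Finset.sum_congr rfl fun v _ => ?_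
          rw [Φ₁pure, rep_eq (k := k) v.1, Finset.sum_mul]
          exact Finset.sum_congr rfl fun t _ => Algebra.TensorProduct.tmul_mul_tmul _ _ _ _
      _ = ∑ p ∈ rep (k := k) w, (p.1 * 𝒮 p.2) ⊗ₜ[k] (1 : H) := by
          refine Finset.sum_congr rfl fun p _ => ?_
          set Φ₂ : (H ⊗[k] H) ⊗[k] H →ₗ[k] H ⊗[k] H :=
            TensorProduct.map (LinearMap.mulRight k (𝒮 p.2))
                (LinearMap.mul' k H ∘ₗ LinearMap.lTensor H 𝒮) ∘ₗ
              (TensorProduct.assoc k H H H).toLinearMap with hΦ₂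
          have Φ₂pure : ∀ x y z' : H, Φ₂ ((x ⊗ₜ[k] y) ⊗ₜ[k] z')
              = (x * 𝒮 p.2) ⊗ₜ[k] (y * 𝒮 z') := by
            intro x y z'
            rw [hΦ₂]
            simp
          calc ∑ v ∈ rep (k := k) p.1, ∑ t ∈ rep (k := k) v.1,
                  (t.1 * 𝒮 p.2) ⊗ₜ[k] (t.2 * 𝒮 v.2)
              = ∑ v ∈ rep (k := k) p.1, ∑ t ∈ rep (k := k) v.1,
                  Φ₂ ((t.1 ⊗ₜ[k] t.2) ⊗ₜ[k] v.2) := by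
                refine Finset.sum_congr rfl fun v _ => Finset.sum_congr rfl fun t _ =>
                  (Φ₂pure _ _ _).symm
            _ = ∑ v ∈ rep (k := k) p.1, ∑ t ∈ rep (k := k) v.2,
                  Φ₂ ((v.1 ⊗ₜ[k] t.1) ⊗ₜ[k] t.2) := coassoc_sum k Φ₂ p.1
            _ = ∑ v ∈ rep (k := k) p.1, Coalgebra.counit (R := k) v.2 •
                  ((v.1 * 𝒮 p.2) ⊗ₜ[k] (1 : H)) := by
                refine Finset.sum_congr rfl fun v _ => ?_
                have : ∑ t ∈ rep (k := k) v.2, Φ₂ ((v.1 ⊗ₜ[k] t.1) ⊗ₜ[k] t.2)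
                    = (v.1 * 𝒮 p.2) ⊗ₜ[k] (∑ t ∈ rep (k := k) v.2, t.1 * 𝒮 t.2) := by
                  rw [tmul_sum]
                  exact Finset.sum_congr rfl fun t _ => Φ₂pure _ _ _
                rw [this, sum_mul_S v.2 _ _ _ (rep_eq (k := k) v.2),
                  Algebra.algebraMap_eq_smul_one, tmul_smul]
            _ = (p.1 * 𝒮 p.2) ⊗ₜ[k] (1 : H) := by
                have : ∀ v : H × H, Coalgebra.counit (R := k) v.2 •
                      ((v.1 * 𝒮 p.2) ⊗ₜ[k] (1 : H))
                    = ((Coalgebra.counit (R := k) v.2 • v.1) * 𝒮 p.2) ⊗ₜ[k] (1 : H) := by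
                  intro v
                  rw [smul_mul_assoc, ← smul_tmul']
                rw [Finset.sum_congr rfl fun v _ => this v]
                rw [← sum_tmul, ← Finset.sum_mul, sum_counit_snd_smul]
      _ = cu w := by
          rw [← sum_tmul, sum_mul_S w _ _ _ (rep_eq (k := k) w)]
          show _ = algebraMap k (H ⊗[k] H) (Coalgebra.counit (R := k) w)
          rw [Algebra.TensorProduct.algebraMap_apply]
  have key := cv_inv_unique h1 h2
  have hz := LinearMap.congr_fun key z
  rw [LinearMap.comp_apply] at hz
  rw [hz, LinearMap.comp_apply, LinearMap.comp_apply, rep_eq (k := k) z, map_sum, map_sum]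
  exact Finset.sum_congr rfl fun p _ => by simp


end Hopf

end PBA


/-- A partial `H`-bimodule algebra over a Hopf algebra `H`: a unital algebra `A`
with a partial left action `⇀ : H ⊗ A → A` and a partial right action `↼ : A ⊗ H → A`
(encoded as curried `k`-bilinear maps), satisfying the partial (bi)module algebra axioms.
Sweedler sums `Σ h₁ ⊗ h₂ = Δ(h)` are encoded by quantifying over arbitrary finite
representations of the comultiplication. -/
structure PartialBimoduleAlgebra (k H A : Type) [Field k] [Ring H] [HopfAlgebra k H]
    [Ring A] [Algebra k A] where
  /-- the partial left action `h ⇀ a` -/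
  actL : H →ₗ[k] A →ₗ[k] A
  /-- the partial right action `a ↼ h` -/
  actR : A →ₗ[k] H →ₗ[k] A
  /-- `1_H ⇀ a = a` -/
  actL_one : ∀ a : A, actL 1 a = a
  /-- `h ⇀ (ab) = (h₁ ⇀ a)(h₂ ⇀ b)` -/
  actL_mul : ∀ (h : H) (a b : A) (ι : Type) (s : Finset ι) (h₁ h₂ : ι → H),
    Coalgebra.comul (R := k) h = ∑ i ∈ s, h₁ i ⊗ₜ[k] h₂ i →
    actL h (a * b) = ∑ i ∈ s, actL (h₁ i) a * actL (h₂ i) b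
  /-- `h ⇀ (g ⇀ a) = (h₁ ⇀ 1_A)((h₂ g) ⇀ a)` -/
  actL_actL : ∀ (h g : H) (a : A) (ι : Type) (s : Finset ι) (h₁ h₂ : ι → H),
    Coalgebra.comul (R := k) h = ∑ i ∈ s, h₁ i ⊗ₜ[k] h₂ i →
    actL h (actL g a) = ∑ i ∈ s, actL (h₁ i) 1 * actL (h₂ i * g) a
  /-- `a ↼ 1_H = a` -/
  actR_one : ∀ a : A, actR a 1 = a
  /-- `(ab) ↼ h = (a ↼ h₁)(b ↼ h₂)` -/
  actR_mul : ∀ (h : H) (a b : A) (ι : Type) (s : Finset ι) (h₁ h₂ : ι → H),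
    Coalgebra.comul (R := k) h = ∑ i ∈ s, h₁ i ⊗ₜ[k] h₂ i →
    actR (a * b) h = ∑ i ∈ s, actR a (h₁ i) * actR b (h₂ i)
  /-- `(a ↼ g) ↼ h = (1_A ↼ h₁)(a ↼ (g h₂))` -/
  actR_actR : ∀ (g h : H) (a : A) (ι : Type) (s : Finset ι) (h₁ h₂ : ι → H),
    Coalgebra.comul (R := k) h = ∑ i ∈ s, h₁ i ⊗ₜ[k] h₂ i →
    actR (actR a g) h = ∑ i ∈ s, actR 1 (h₁ i) * actR a (g * h₂ i)
  /-- `(h ⇀ a) ↼ g = h ⇀ (a ↼ g)` -/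
  compat : ∀ (h g : H) (a : A), actR (actL h a) g = actL h (actR a g)

/-- The two-fold iterated comultiplication `h ↦ h₁ ⊗ (h₂ ⊗ h₃)`. -/
def comul3 (k H : Type) [Field k] [Ring H] [HopfAlgebra k H] :
    H →ₗ[k] H ⊗[k] (H ⊗[k] H) :=
  LinearMap.lTensor H (Coalgebra.comul (R := k)) ∘ₗ Coalgebra.comul (R := k)

/-- `μ` is the partial twisted smash product multiplication on `A ⊗ H`:
on pure tensors, `(a ⊗ h)(b ⊗ g) = a (h₁ ⇀ b ↼ S(h₃)) ⊗ h₂ g`. -/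
def IsPartialSmashMul (k H A : Type) [Field k] [Ring H] [HopfAlgebra k H]
    [Ring A] [Algebra k A] (P : PartialBimoduleAlgebra k H A)
    (μ : A ⊗[k] H →ₗ[k] A ⊗[k] H →ₗ[k] A ⊗[k] H) : Prop :=
  ∀ (a b : A) (h g : H) (ι : Type) (s : Finset ι) (h₁ h₂ h₃ : ι → H),
    comul3 k H h = ∑ i ∈ s, h₁ i ⊗ₜ[k] (h₂ i ⊗ₜ[k] h₃ i) →
    μ (a ⊗ₜ[k] h) (b ⊗ₜ[k] g)
      = ∑ i ∈ s,
          (a * P.actR (P.actL (h₁ i) b) (HopfAlgebra.antipode (R := k) (h₃ i)))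
            ⊗ₜ[k] (h₂ i * g)

/-- The symmetry condition `(a ↼ S(h₁)) ⊗ h₂ = (a ↼ S(h₂)) ⊗ h₁` in `A ⊗ H`. -/
def SymCond (k H A : Type) [Field k] [Ring H] [HopfAlgebra k H]
    [Ring A] [Algebra k A] (P : PartialBimoduleAlgebra k H A) : Prop :=
  ∀ (a : A) (h : H) (ι : Type) (s : Finset ι) (h₁ h₂ : ι → H),
    Coalgebra.comul (R := k) h = ∑ i ∈ s, h₁ i ⊗ₜ[k] h₂ i →
    ∑ i ∈ s, P.actR a (HopfAlgebra.antipode (R := k) (h₁ i)) ⊗ₜ[k] h₂ i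
      = ∑ i ∈ s, P.actR a (HopfAlgebra.antipode (R := k) (h₂ i)) ⊗ₜ[k] h₁ i

/-- The convolution product on `Hom_k(H, A)`: `(f ∗ g)(h) = f(h₁) g(h₂)`. -/
def conv (k H A : Type) [Field k] [Ring H] [HopfAlgebra k H]
    [Ring A] [Algebra k A] (f g : H →ₗ[k] A) : H →ₗ[k] A :=
  LinearMap.mul' k A ∘ₗ TensorProduct.map f g ∘ₗ Coalgebra.comul (R := k)


section Helpers

open PBA

variable {k H A : Type} [Field k] [Ring H] [HopfAlgebra k H] [Ring A] [Algebra k A]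

local notation "𝒮" => (HopfAlgebra.antipode (R := k) (A := H))

variable (P : PartialBimoduleAlgebra k H A)

/-- `BF b (x ⊗ y) = (x ⇀ b) ↼ S y` -/
def BF (b : A) : H ⊗[k] H →ₗ[k] A :=
  TensorProduct.lift ((P.actR ∘ₗ P.actL.flip b).compl₂ 𝒮)

@[simp] lemma BF_tmul (b : A) (x y : H) :
    BF P b (x ⊗ₜ[k] y) = P.actR (P.actL x b) (𝒮 y) := rfl

/-- `BG a t (y ⊗ u) = ((y t₁) ⇀ a) ↼ S (u t₂)` -/
def BG (a : A) (t : H × H) : H ⊗[k] H →ₗ[k] A :=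
  TensorProduct.lift ((P.actR ∘ₗ (P.actL.flip a ∘ₗ LinearMap.mulRight k t.1)).compl₂
    (𝒮 ∘ₗ LinearMap.mulRight k t.2))

@[simp] lemma BG_tmul (a : A) (t : H × H) (y u : H) :
    BG P a t (y ⊗ₜ[k] u) = P.actR (P.actL (y * t.1) a) (𝒮 (u * t.2)) := rfl

def PhiL1 (b : A) (F : H →ₗ[k] A) : (H ⊗[k] H) ⊗[k] H →ₗ[k] A :=
  LinearMap.mul' k A ∘ₗ TensorProduct.map (BF P b) F

@[simp] lemma PhiL1_tmul (b : A) (F : H →ₗ[k] A) (x y z : H) :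
    PhiL1 P b F ((x ⊗ₜ[k] y) ⊗ₜ[k] z) = P.actR (P.actL x b) (𝒮 y) * F z := rfl

def PhiL7 (c a : A) (t : H × H) : (H ⊗[k] H) ⊗[k] H →ₗ[k] A :=
  LinearMap.mul' k A ∘ₗ TensorProduct.map (P.actR c ∘ₗ 𝒮) (BG P a t) ∘ₗ
    (TensorProduct.comm k (H ⊗[k] H) H).toLinearMap

@[simp] lemma PhiL7_tmul (c a : A) (t : H × H) (x y z : H) :
    PhiL7 P c a t ((x ⊗ₜ[k] y) ⊗ₜ[k] z)
      = P.actR c (𝒮 z) * P.actR (P.actL (x * t.1) a) (𝒮 (y * t.2)) := rfl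

def PhiR4 (b : A) (ct : A) (t1 z2 : H) : (H ⊗[k] H) ⊗[k] H →ₗ[k] A :=
  P.actR.flip (𝒮 z2) ∘ₗ LinearMap.mul' k A ∘ₗ
    TensorProduct.map (P.actL.flip b)
      (LinearMap.mul' k A ∘ₗ TensorProduct.map (P.actL.flip 1)
        (P.actL.flip ct ∘ₗ LinearMap.mulRight k t1)) ∘ₗ
      (TensorProduct.assoc k H H H).toLinearMap

@[simp] lemma PhiR4_tmul (b : A) (ct : A) (t1 z2 : H) (x y z : H) :
    PhiR4 P b ct t1 z2 ((x ⊗ₜ[k] y) ⊗ₜ[k] z)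
      = P.actR (P.actL x b * (P.actL y 1 * P.actL (z * t1) ct)) (𝒮 z2) := rfl

def PhiR8 (U c2 : A) (t2 : H) : (H ⊗[k] H) ⊗[k] H →ₗ[k] A :=
  LinearMap.mul' k A ∘ₗ
    TensorProduct.map (P.actR U ∘ₗ 𝒮)
      (LinearMap.mul' k A ∘ₗ TensorProduct.map (P.actR 1 ∘ₗ 𝒮)
          (P.actR c2 ∘ₗ 𝒮 ∘ₗ LinearMap.mulRight k t2) ∘ₗ
        (TensorProduct.comm k H H).toLinearMap) ∘ₗ
    (TensorProduct.comm k (H ⊗[k] H) H).toLinearMap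

@[simp] lemma PhiR8_tmul (U c2 : A) (t2 : H) (x y z : H) :
    PhiR8 P U c2 t2 ((x ⊗ₜ[k] y) ⊗ₜ[k] z)
      = P.actR U (𝒮 z) * (P.actR 1 (𝒮 y) * P.actR c2 (𝒮 (x * t2))) := rfl

def PhiR10 (b a : A) (t : H × H) : (H ⊗[k] H) ⊗[k] H →ₗ[k] A :=
  LinearMap.mul' k A ∘ₗ TensorProduct.map (BF P b) (BG P a t) ∘ₗ
    (TensorProduct.tensorTensorTensorComm k H H H H).toLinearMap ∘ₗ
    LinearMap.lTensor (H ⊗[k] H) (TensorProduct.comm k H H).toLinearMap ∘ₗ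
    LinearMap.lTensor (H ⊗[k] H) (Coalgebra.comul (R := k))

lemma PhiR10_tmul (b a : A) (t : H × H) (x y z : H) :
    PhiR10 P b a t ((x ⊗ₜ[k] y) ⊗ₜ[k] z)
      = ∑ q ∈ rep (k := k) z,
          P.actR (P.actL x b) (𝒮 q.2) * P.actR (P.actL (y * t.1) a) (𝒮 (q.1 * t.2)) := by
  rw [PhiR10]
  simp only [LinearMap.comp_apply, LinearMap.lTensor_tmul, rep_eq (k := k) z, tmul_sum, map_sum]
  refine Finset.sum_congr rfl fun q _ => ?_
  simp


theorem key_lemma (hsym : SymCond k H A P) (φ : A →ₗ[k] (H →ₗ[k] A))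
    (hφ : ∀ (a : A) (h : H) (ι : Type) (s : Finset ι) (h₁ h₂ : ι → H),
      Coalgebra.comul (R := k) h = ∑ i ∈ s, h₁ i ⊗ₜ[k] h₂ i →
      φ a h = ∑ i ∈ s, P.actR (P.actL (h₁ i) a) (HopfAlgebra.antipode (R := k) (h₂ i)))
    (a b : A) (h : H) :
    conv k H A (φ b) (φ a ∘ₗ LinearMap.mulRight k h) = φ (b * φ a h) := by
  apply LinearMap.ext; intro x
  have hφ' : ∀ (c : A) (z : H), φ c z
      = ∑ p ∈ rep (k := k) z, P.actR (P.actL p.1 c) (𝒮 p.2) :=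
    fun c z => hφ c z (H × H) (rep (k := k) z) Prod.fst Prod.snd (rep_eq (k := k) z)
  have hφmul : ∀ (c : A) (u : H), φ c (u * h)
      = ∑ n ∈ rep (k := k) u, ∑ t ∈ rep (k := k) h,
          P.actR (P.actL (n.1 * t.1) c) (𝒮 (n.2 * t.2)) := by
    intro c u
    rw [hφ c (u * h) ((H × H) × (H × H)) (rep (k := k) u ×ˢ rep (k := k) h)
      (fun y => y.1.1 * y.2.1) (fun y => y.1.2 * y.2.2)
      (by rw [comul_mul_rep, ← Finset.sum_product']), Finset.sum_product]
  have hLmul : ∀ (z : H) (c d : A), P.actL z (c * d)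
      = ∑ w ∈ rep (k := k) z, P.actL w.1 c * P.actL w.2 d :=
    fun z c d => P.actL_mul z c d (H × H) _ Prod.fst Prod.snd (rep_eq (k := k) z)
  have hLL : ∀ (z g : H) (c : A), P.actL z (P.actL g c)
      = ∑ r ∈ rep (k := k) z, P.actL r.1 1 * P.actL (r.2 * g) c :=
    fun z g c => P.actL_actL z g c (H × H) _ Prod.fst Prod.snd (rep_eq (k := k) z)
  have hRmulS : ∀ (z : H) (c d : A), P.actR (c * d) (𝒮 z)
      = ∑ q ∈ rep (k := k) z, P.actR c (𝒮 q.2) * P.actR d (𝒮 q.1) :=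
    fun z c d => P.actR_mul (𝒮 z) c d (H × H) (rep (k := k) z)
      (fun q => 𝒮 q.2) (fun q => 𝒮 q.1) (comul_S_rep z)
  have hRRS : ∀ (g z : H) (c : A), P.actR (P.actR c g) (𝒮 z)
      = ∑ q ∈ rep (k := k) z, P.actR 1 (𝒮 q.2) * P.actR c (g * 𝒮 q.1) :=
    fun g z c => P.actR_actR g (𝒮 z) c (H × H) (rep (k := k) z)
      (fun q => 𝒮 q.2) (fun q => 𝒮 q.1) (comul_S_rep z)
  have hL : conv k H A (φ b) (φ a ∘ₗ LinearMap.mulRight k h) x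
      = ∑ p ∈ rep (k := k) x, ∑ t ∈ rep (k := k) h, ∑ w ∈ rep (k := k) p.2,
          ∑ q ∈ rep (k := k) w.2,
            P.actR (P.actL p.1 b) (𝒮 q.2) * P.actR (P.actL (w.1 * t.1) a) (𝒮 (q.1 * t.2)) := by
    calc conv k H A (φ b) (φ a ∘ₗ LinearMap.mulRight k h) x
        = ∑ p ∈ rep (k := k) x, φ b p.1 * φ a (p.2 * h) := by
          rw [conv, LinearMap.comp_apply, LinearMap.comp_apply, rep_eq (k := k) x, map_sum,
            map_sum]
          exact Finset.sum_congr rfl fun p _ => by simp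
      _ = ∑ p ∈ rep (k := k) x, ∑ w ∈ rep (k := k) p.1,
            PhiL1 P b (φ a ∘ₗ LinearMap.mulRight k h) ((w.1 ⊗ₜ[k] w.2) ⊗ₜ[k] p.2) := by
          refine Finset.sum_congr rfl fun p _ => ?_
          rw [hφ' b p.1, Finset.sum_mul]
          exact Finset.sum_congr rfl fun w _ => by simp
      _ = ∑ p ∈ rep (k := k) x, ∑ w ∈ rep (k := k) p.2,
            PhiL1 P b (φ a ∘ₗ LinearMap.mulRight k h) ((p.1 ⊗ₜ[k] w.1) ⊗ₜ[k] w.2) :=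
          coassoc_sum k _ x
      _ = ∑ p ∈ rep (k := k) x, ∑ w ∈ rep (k := k) p.2,
            P.actR (P.actL p.1 b) (𝒮 w.2) * φ a (w.1 * h) := by
          refine Finset.sum_congr rfl fun p _ => ?_
          have hs := hsym (P.actL p.1 b) p.2 (H × H) (rep (k := k) p.2) Prod.fst Prod.snd
            (rep_eq (k := k) p.2)
          have h2 := congrArg (LinearMap.mul' k A ∘ₗ
            TensorProduct.map (LinearMap.id (R := k) (M := A))
              (φ a ∘ₗ LinearMap.mulRight k h)) hs
          simp only [map_sum, LinearMap.comp_apply, TensorProduct.map_tmul,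
            LinearMap.mul'_apply, LinearMap.id_apply, LinearMap.mulRight_apply] at h2
          calc ∑ w ∈ rep (k := k) p.2,
                PhiL1 P b (φ a ∘ₗ LinearMap.mulRight k h) ((p.1 ⊗ₜ[k] w.1) ⊗ₜ[k] w.2)
              = ∑ w ∈ rep (k := k) p.2,
                  P.actR (P.actL p.1 b) (𝒮 w.1) * φ a (w.2 * h) :=
                Finset.sum_congr rfl fun w _ => by simp
            _ = ∑ w ∈ rep (k := k) p.2,
                  P.actR (P.actL p.1 b) (𝒮 w.2) * φ a (w.1 * h) := h2
      _ = ∑ p ∈ rep (k := k) x, ∑ w ∈ rep (k := k) p.2, ∑ t ∈ rep (k := k) h,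
            ∑ n ∈ rep (k := k) w.1,
              P.actR (P.actL p.1 b) (𝒮 w.2)
                * P.actR (P.actL (n.1 * t.1) a) (𝒮 (n.2 * t.2)) := by
          refine Finset.sum_congr rfl fun p _ => Finset.sum_congr rfl fun w _ => ?_
          rw [hφmul a w.1]
          simp only [Finset.mul_sum]
          exact Finset.sum_comm
      _ = ∑ p ∈ rep (k := k) x, ∑ t ∈ rep (k := k) h, ∑ w ∈ rep (k := k) p.2,
            ∑ n ∈ rep (k := k) w.1,
              P.actR (P.actL p.1 b) (𝒮 w.2)
                * P.actR (P.actL (n.1 * t.1) a) (𝒮 (n.2 * t.2)) :=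
          Finset.sum_congr rfl fun p _ => Finset.sum_comm
      _ = ∑ p ∈ rep (k := k) x, ∑ t ∈ rep (k := k) h, ∑ w ∈ rep (k := k) p.2,
            ∑ q ∈ rep (k := k) w.2,
              P.actR (P.actL p.1 b) (𝒮 q.2)
                * P.actR (P.actL (w.1 * t.1) a) (𝒮 (q.1 * t.2)) := by
          refine Finset.sum_congr rfl fun p _ => Finset.sum_congr rfl fun t _ => ?_
          calc ∑ w ∈ rep (k := k) p.2, ∑ n ∈ rep (k := k) w.1,
                P.actR (P.actL p.1 b) (𝒮 w.2)
                  * P.actR (P.actL (n.1 * t.1) a) (𝒮 (n.2 * t.2))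
              = ∑ w ∈ rep (k := k) p.2, ∑ n ∈ rep (k := k) w.1,
                  PhiL7 P (P.actL p.1 b) a t ((n.1 ⊗ₜ[k] n.2) ⊗ₜ[k] w.2) :=
                Finset.sum_congr rfl fun w _ => Finset.sum_congr rfl fun n _ => by simp
            _ = ∑ w ∈ rep (k := k) p.2, ∑ n ∈ rep (k := k) w.2,
                  PhiL7 P (P.actL p.1 b) a t ((w.1 ⊗ₜ[k] n.1) ⊗ₜ[k] n.2) :=
                coassoc_sum k _ p.2
            _ = _ :=
                Finset.sum_congr rfl fun w _ => Finset.sum_congr rfl fun n _ => by simp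
  have hR : φ (b * φ a h) x
      = ∑ p ∈ rep (k := k) x, ∑ t ∈ rep (k := k) h, ∑ w ∈ rep (k := k) p.2,
          ∑ q ∈ rep (k := k) w.2,
            P.actR (P.actL p.1 b) (𝒮 q.2) * P.actR (P.actL (w.1 * t.1) a) (𝒮 (q.1 * t.2)) := by
    calc φ (b * φ a h) x
        = ∑ p ∈ rep (k := k) x, P.actR (P.actL p.1 (b * φ a h)) (𝒮 p.2) := hφ' _ x
      _ = ∑ p ∈ rep (k := k) x, ∑ w ∈ rep (k := k) p.1, ∑ t ∈ rep (k := k) h,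
            ∑ r ∈ rep (k := k) w.2,
              PhiR4 P b (P.actR a (𝒮 t.2)) t.1 p.2 ((w.1 ⊗ₜ[k] r.1) ⊗ₜ[k] r.2) := by
          refine Finset.sum_congr rfl fun p _ => ?_
          rw [hLmul p.1 b (φ a h), map_sum, LinearMap.sum_apply]
          refine Finset.sum_congr rfl fun w _ => ?_
          have e2 : P.actL w.2 (φ a h) = ∑ t ∈ rep (k := k) h, ∑ r ∈ rep (k := k) w.2,
              P.actL r.1 1 * P.actL (r.2 * t.1) (P.actR a (𝒮 t.2)) := by
            rw [hφ' a h, map_sum]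
            refine Finset.sum_congr rfl fun t _ => ?_
            rw [P.compat, hLL]
          rw [e2, Finset.mul_sum, map_sum, LinearMap.sum_apply]
          refine Finset.sum_congr rfl fun t _ => ?_
          rw [Finset.mul_sum, map_sum, LinearMap.sum_apply]
          exact Finset.sum_congr rfl fun r _ => by simp
      _ = ∑ p ∈ rep (k := k) x, ∑ t ∈ rep (k := k) h, ∑ w ∈ rep (k := k) p.1,
            ∑ r ∈ rep (k := k) w.2,
              PhiR4 P b (P.actR a (𝒮 t.2)) t.1 p.2 ((w.1 ⊗ₜ[k] r.1) ⊗ₜ[k] r.2) :=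
          Finset.sum_congr rfl fun p _ => Finset.sum_comm
      _ = ∑ p ∈ rep (k := k) x, ∑ t ∈ rep (k := k) h, ∑ w ∈ rep (k := k) p.1,
            P.actR (P.actL w.1 b * P.actL (w.2 * t.1) (P.actR a (𝒮 t.2))) (𝒮 p.2) := by
          refine Finset.sum_congr rfl fun p _ => Finset.sum_congr rfl fun t _ => ?_
          rw [← coassoc_sum k (PhiR4 P b (P.actR a (𝒮 t.2)) t.1 p.2) p.1]
          refine Finset.sum_congr rfl fun w _ => ?_
          have merge : ∑ r ∈ rep (k := k) w.1, P.actL r.1 b * P.actL r.2 1 = P.actL w.1 b := by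
            rw [← hLmul, mul_one]
          have : P.actR (P.actL w.1 b * P.actL (w.2 * t.1) (P.actR a (𝒮 t.2))) (𝒮 p.2)
              = ∑ r ∈ rep (k := k) w.1,
                  PhiR4 P b (P.actR a (𝒮 t.2)) t.1 p.2 ((r.1 ⊗ₜ[k] r.2) ⊗ₜ[k] w.2) := by
            rw [← merge, Finset.sum_mul, map_sum, LinearMap.sum_apply]
            exact Finset.sum_congr rfl fun r _ => by simp [mul_assoc]
          exact this.symm
      _ = ∑ p ∈ rep (k := k) x, ∑ t ∈ rep (k := k) h, ∑ w ∈ rep (k := k) p.1,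
            ∑ q ∈ rep (k := k) p.2,
              P.actR (P.actL w.1 b) (𝒮 q.2)
                * P.actR (P.actL (w.2 * t.1) (P.actR a (𝒮 t.2))) (𝒮 q.1) := by
          refine Finset.sum_congr rfl fun p _ => Finset.sum_congr rfl fun t _ =>
            Finset.sum_congr rfl fun w _ => ?_
          exact hRmulS p.2 _ _
      _ = ∑ p ∈ rep (k := k) x, ∑ t ∈ rep (k := k) h, ∑ w ∈ rep (k := k) p.1,
            ∑ q ∈ rep (k := k) p.2, ∑ n ∈ rep (k := k) q.1,
              P.actR (P.actL w.1 b) (𝒮 q.2)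
                * (P.actR 1 (𝒮 n.2) * P.actR (P.actL (w.2 * t.1) a) (𝒮 (n.1 * t.2))) := by
          refine Finset.sum_congr rfl fun p _ => Finset.sum_congr rfl fun t _ =>
            Finset.sum_congr rfl fun w _ => Finset.sum_congr rfl fun q _ => ?_
          rw [← P.compat, hRRS, Finset.mul_sum]
          exact Finset.sum_congr rfl fun n _ => by rw [← S_mul_anti]
      _ = ∑ p ∈ rep (k := k) x, ∑ t ∈ rep (k := k) h, ∑ w ∈ rep (k := k) p.1,
            ∑ q ∈ rep (k := k) p.2, ∑ n ∈ rep (k := k) q.2,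
              P.actR (P.actL w.1 b) (𝒮 n.2)
                * (P.actR 1 (𝒮 n.1) * P.actR (P.actL (w.2 * t.1) a) (𝒮 (q.1 * t.2))) := by
          refine Finset.sum_congr rfl fun p _ => Finset.sum_congr rfl fun t _ =>
            Finset.sum_congr rfl fun w _ => ?_
          calc ∑ q ∈ rep (k := k) p.2, ∑ n ∈ rep (k := k) q.1,
                P.actR (P.actL w.1 b) (𝒮 q.2)
                  * (P.actR 1 (𝒮 n.2) * P.actR (P.actL (w.2 * t.1) a) (𝒮 (n.1 * t.2)))
              = ∑ q ∈ rep (k := k) p.2, ∑ n ∈ rep (k := k) q.1,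
                  PhiR8 P (P.actL w.1 b) (P.actL (w.2 * t.1) a) t.2
                    ((n.1 ⊗ₜ[k] n.2) ⊗ₜ[k] q.2) :=
                Finset.sum_congr rfl fun q _ => Finset.sum_congr rfl fun n _ => by simp
            _ = ∑ q ∈ rep (k := k) p.2, ∑ n ∈ rep (k := k) q.2,
                  PhiR8 P (P.actL w.1 b) (P.actL (w.2 * t.1) a) t.2
                    ((q.1 ⊗ₜ[k] n.1) ⊗ₜ[k] n.2) := coassoc_sum k _ p.2
            _ = _ :=
                Finset.sum_congr rfl fun q _ => Finset.sum_congr rfl fun n _ => by simp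
      _ = ∑ p ∈ rep (k := k) x, ∑ t ∈ rep (k := k) h, ∑ w ∈ rep (k := k) p.1,
            ∑ q ∈ rep (k := k) p.2,
              P.actR (P.actL w.1 b) (𝒮 q.2)
                * P.actR (P.actL (w.2 * t.1) a) (𝒮 (q.1 * t.2)) := by
          refine Finset.sum_congr rfl fun p _ => Finset.sum_congr rfl fun t _ =>
            Finset.sum_congr rfl fun w _ => Finset.sum_congr rfl fun q _ => ?_
          have merge : ∑ n ∈ rep (k := k) q.2,
              P.actR (P.actL w.1 b) (𝒮 n.2) * P.actR 1 (𝒮 n.1)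
                = P.actR (P.actL w.1 b) (𝒮 q.2) := by
            rw [← hRmulS, mul_one]
          calc ∑ n ∈ rep (k := k) q.2,
                P.actR (P.actL w.1 b) (𝒮 n.2)
                  * (P.actR 1 (𝒮 n.1) * P.actR (P.actL (w.2 * t.1) a) (𝒮 (q.1 * t.2)))
              = ∑ n ∈ rep (k := k) q.2,
                  (P.actR (P.actL w.1 b) (𝒮 n.2) * P.actR 1 (𝒮 n.1))
                    * P.actR (P.actL (w.2 * t.1) a) (𝒮 (q.1 * t.2)) :=
                Finset.sum_congr rfl fun n _ => by rw [mul_assoc]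
            _ = (∑ n ∈ rep (k := k) q.2,
                  P.actR (P.actL w.1 b) (𝒮 n.2) * P.actR 1 (𝒮 n.1))
                    * P.actR (P.actL (w.2 * t.1) a) (𝒮 (q.1 * t.2)) :=
                (Finset.sum_mul _ _ _).symm
            _ = _ := by rw [merge]
      _ = ∑ t ∈ rep (k := k) h, ∑ p ∈ rep (k := k) x, ∑ w ∈ rep (k := k) p.1,
            ∑ q ∈ rep (k := k) p.2,
              P.actR (P.actL w.1 b) (𝒮 q.2)
                * P.actR (P.actL (w.2 * t.1) a) (𝒮 (q.1 * t.2)) := Finset.sum_comm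
      _ = ∑ t ∈ rep (k := k) h, ∑ p ∈ rep (k := k) x, ∑ w ∈ rep (k := k) p.2,
            ∑ q ∈ rep (k := k) w.2,
              P.actR (P.actL p.1 b) (𝒮 q.2)
                * P.actR (P.actL (w.1 * t.1) a) (𝒮 (q.1 * t.2)) := by
          refine Finset.sum_congr rfl fun t _ => ?_
          calc ∑ p ∈ rep (k := k) x, ∑ w ∈ rep (k := k) p.1, ∑ q ∈ rep (k := k) p.2,
                P.actR (P.actL w.1 b) (𝒮 q.2)
                  * P.actR (P.actL (w.2 * t.1) a) (𝒮 (q.1 * t.2))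
              = ∑ p ∈ rep (k := k) x, ∑ w ∈ rep (k := k) p.1,
                  PhiR10 P b a t ((w.1 ⊗ₜ[k] w.2) ⊗ₜ[k] p.2) :=
                Finset.sum_congr rfl fun p _ => Finset.sum_congr rfl fun w _ =>
                  (PhiR10_tmul P b a t w.1 w.2 p.2).symm
            _ = ∑ p ∈ rep (k := k) x, ∑ w ∈ rep (k := k) p.2,
                  PhiR10 P b a t ((p.1 ⊗ₜ[k] w.1) ⊗ₜ[k] w.2) := coassoc_sum k _ x
            _ = _ :=
                Finset.sum_congr rfl fun p _ => Finset.sum_congr rfl fun w _ =>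
                  PhiR10_tmul P b a t p.1 w.1 w.2
      _ = ∑ p ∈ rep (k := k) x, ∑ t ∈ rep (k := k) h, ∑ w ∈ rep (k := k) p.2,
            ∑ q ∈ rep (k := k) w.2,
              P.actR (P.actL p.1 b) (𝒮 q.2)
                * P.actR (P.actL (w.1 * t.1) a) (𝒮 (q.1 * t.2)) := Finset.sum_comm
  exact hL.trans hR.symm

end Helpers

/-- with `φ(a)(h) = h₁ ⇀ a ↼ S(h₂)` and `(h ▷ f)(x) = f(xh)`, one has
`φ(b) ∗ (h ▷ φ(a)) = φ(b (h₁ ⇀ a ↼ S(h₂))) = φ(b · φ(a)(h))`; in particular,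
`φ(1_A) ∗ (h ▷ φ(a)) = φ(h₁ ⇀ a ↼ S(h₂))`. -/
theorem phi_conv_translate
    (k H A : Type) [Field k] [Ring H] [HopfAlgebra k H] [Ring A] [Algebra k A]
    (P : PartialBimoduleAlgebra k H A) (hsym : SymCond k H A P)
    (φ : A →ₗ[k] (H →ₗ[k] A))
    (hφ : ∀ (a : A) (h : H) (ι : Type) (s : Finset ι) (h₁ h₂ : ι → H),
      Coalgebra.comul (R := k) h = ∑ i ∈ s, h₁ i ⊗ₜ[k] h₂ i →
      φ a h = ∑ i ∈ s, P.actR (P.actL (h₁ i) a) (HopfAlgebra.antipode (R := k) (h₂ i))) :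
    -- `φ(b) ∗ (h ▷ φ(a)) = φ(b (h₁ ⇀ a ↼ S(h₂)))`
    (∀ (a b : A) (h : H),
      conv k H A (φ b) (φ a ∘ₗ LinearMap.mulRight k h) = φ (b * φ a h)) ∧
    -- in particular `φ(1_A) ∗ (h ▷ φ(a)) = φ(h₁ ⇀ a ↼ S(h₂))`
    (∀ (a : A) (h : H),
      conv k H A (φ 1) (φ a ∘ₗ LinearMap.mulRight k h) = φ (φ a h)) := by
  refine ⟨fun a b h => key_lemma P hsym φ hφ a b h, fun a h => ?_⟩
  rw [key_lemma P hsym φ hφ a 1 h, one_mul]
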